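/- Let $n, m \ge 0$ and let $f \in C^{m+n}([a,b])$ satisfy $f(t_i) = 0$ for distinct points $t_1, \dots, t_n \in [a,b]$. Then there exists $g \in C^{m}([a,b])$ such that $f(t) = g(t) \prod_{i=1}^{n} (t - t_i)$ for all $t \in [a,b]$. -/

import Mathlib

open Set intervalIntegral

noncomputable def smI (c : ℝ) (j : ℕ) (φ : ℝ → ℝ) : ℝ → ℝ :=
  fun x => ∫ s in (0:ℝ)..1, s ^ j * φ (c + s * (x - c))

lemma umem {a b c x s : ℝ} (hc : c ∈ Icc a b) (hx : x ∈ Icc a b)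
    (hs : s ∈ Icc (0:ℝ) 1) : c + s * (x - c) ∈ Icc a b := by
  obtain ⟨hc1, hc2⟩ := hc; obtain ⟨hx1, hx2⟩ := hx; obtain ⟨hs1, hs2⟩ := hs
  constructor <;> nlinarith

lemma integrand_contOn {a b c x : ℝ} (j : ℕ) {φ : ℝ → ℝ}
    (hφ : ContinuousOn φ (Icc a b)) (hc : c ∈ Icc a b) (hx : x ∈ Icc a b) :
    ContinuousOn (fun s : ℝ => s ^ j * φ (c + s * (x - c))) (Icc (0:ℝ) 1) := by
  refine ContinuousOn.mul (by fun_prop) (hφ.comp (by fun_prop) ?_)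
  intro s hs; exact umem hc hx hs

lemma integrand_intble {a b c x : ℝ} (j : ℕ) {φ : ℝ → ℝ}
    (hφ : ContinuousOn φ (Icc a b)) (hc : c ∈ Icc a b) (hx : x ∈ Icc a b) :
    IntervalIntegrable (fun s : ℝ => s ^ j * φ (c + s * (x - c))) MeasureTheory.volume 0 1 := by
  apply ContinuousOn.intervalIntegrable
  rw [uIcc_of_le zero_le_one]
  exact integrand_contOn j hφ hc hx

/-- First-order Taylor estimate, uniform on `Icc a b`. -/
lemma taylor1 {a b : ℝ} (hab : a < b) {φ : ℝ → ℝ}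
    (hφ : ContDiffOn ℝ 1 φ (Icc a b)) {ε : ℝ} (hε : 0 < ε) :
    ∃ δ > 0, ∀ y₀ ∈ Icc a b, ∀ y ∈ Icc a b, |y - y₀| < δ →
      |φ y - φ y₀ - (y - y₀) * derivWithin φ (Icc a b) y₀| ≤ ε * |y - y₀| := by
  set D := derivWithin φ (Icc a b) with hD
  have hDc : ContinuousOn D (Icc a b) :=
    hφ.continuousOn_derivWithin (uniqueDiffOn_Icc hab) le_rfl
  have huc := isCompact_Icc.uniformContinuousOn_of_continuous hDc
  rw [Metric.uniformContinuousOn_iff] at huc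
  obtain ⟨δ, hδpos, H⟩ := huc ε hε
  refine ⟨δ, hδpos, fun y₀ hy₀ y hy hyd => ?_⟩
  have hsub : uIcc y₀ y ⊆ Icc a b := uIcc_subset_Icc hy₀ hy
  have key : ∀ u ∈ uIcc y₀ y,
      HasDerivWithinAt (fun v => φ v - v * D y₀) (D u - D y₀) (uIcc y₀ y) u := by
    intro u hu
    have h1 : HasDerivWithinAt φ (D u) (Icc a b) u :=
      (hφ.differentiableOn one_ne_zero u (hsub hu)).hasDerivWithinAt
    exact (h1.mono hsub).sub ((hasDerivAt_mul_const (D y₀)).hasDerivWithinAt)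
  have bound : ∀ u ∈ uIcc y₀ y, ‖D u - D y₀‖ ≤ ε := by
    intro u hu
    have hdist : dist u y₀ ≤ dist y y₀ := by
      rw [Real.dist_eq, Real.dist_eq]
      rcases le_total y₀ y with h | h
      · rw [uIcc_of_le h] at hu
        rw [abs_of_nonneg (by linarith [hu.1]), abs_of_nonneg (by linarith)]
        linarith [hu.2]
      · rw [uIcc_of_ge h] at hu
        rw [abs_of_nonpos (by linarith [hu.2]), abs_of_nonpos (by linarith)]
        linarith [hu.1]
    have : dist (D u) (D y₀) < ε := by
      apply H u (hsub hu) y₀ hy₀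
      calc dist u y₀ ≤ dist y y₀ := hdist
        _ < δ := by rwa [Real.dist_eq]
    rw [Real.norm_eq_abs, ← Real.dist_eq]
    exact this.le
  have := (convex_uIcc y₀ y).norm_image_sub_le_of_norm_hasDerivWithin_le key bound
    left_mem_uIcc right_mem_uIcc
  calc |φ y - φ y₀ - (y - y₀) * D y₀|
      = ‖(φ y - y * D y₀) - (φ y₀ - y₀ * D y₀)‖ := by rw [Real.norm_eq_abs]; ring_nf
    _ ≤ ε * ‖y - y₀‖ := this
    _ = ε * |y - y₀| := by rw [Real.norm_eq_abs]

lemma smI_hasDerivWithinAt {a b c : ℝ} (hab : a < b) (hc : c ∈ Icc a b) (j : ℕ)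
    {φ : ℝ → ℝ} (hφ : ContDiffOn ℝ 1 φ (Icc a b)) {x₀ : ℝ} (hx₀ : x₀ ∈ Icc a b) :
    HasDerivWithinAt (smI c j φ)
      (smI c (j + 1) (derivWithin φ (Icc a b)) x₀) (Icc a b) x₀ := by
  set D := derivWithin φ (Icc a b) with hDdef
  have hDc : ContinuousOn D (Icc a b) :=
    hφ.continuousOn_derivWithin (uniqueDiffOn_Icc hab) le_rfl
  have hφc : ContinuousOn φ (Icc a b) := hφ.continuousOn
  rw [hasDerivWithinAt_iff_isLittleO, Asymptotics.isLittleO_iff]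
  intro ε hε
  obtain ⟨δ, hδpos, hδ⟩ := taylor1 hab hφ hε
  have hmem : Metric.ball x₀ δ ∩ Icc a b ∈ nhdsWithin x₀ (Icc a b) :=
    Filter.inter_mem (mem_nhdsWithin_of_mem_nhds (Metric.ball_mem_nhds _ hδpos))
      self_mem_nhdsWithin
  filter_upwards [hmem] with x hx
  obtain ⟨hxb, hxI⟩ := hx
  have hxd : |x - x₀| < δ := by
    have := Metric.mem_ball.1 hxb; rwa [Real.dist_eq] at this
  have comb : smI c j φ x - smI c j φ x₀ - (x - x₀) • smI c (j + 1) D x₀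
      = ∫ s in (0:ℝ)..1, (s ^ j * φ (c + s * (x - c)) - s ^ j * φ (c + s * (x₀ - c))
          - (x - x₀) * (s ^ (j + 1) * D (c + s * (x₀ - c)))) := by
    have i1 := integrand_intble j hφc hc hxI
    have i2 := integrand_intble j hφc hc hx₀
    have i3 := (integrand_intble (j + 1) hDc hc hx₀).const_mul (x - x₀)
    rw [smul_eq_mul]
    simp only [smI]
    rw [← intervalIntegral.integral_const_mul, ← intervalIntegral.integral_sub i1 i2,
      ← intervalIntegral.integral_sub (i1.sub i2) i3]
  rw [comb]
  have hbnd : ∀ s ∈ Set.uIoc (0:ℝ) 1,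
      ‖s ^ j * φ (c + s * (x - c)) - s ^ j * φ (c + s * (x₀ - c))
        - (x - x₀) * (s ^ (j + 1) * D (c + s * (x₀ - c)))‖ ≤ ε * |x - x₀| := by
    intro s hs
    rw [uIoc_of_le zero_le_one] at hs
    have hs01 : s ∈ Icc (0:ℝ) 1 := ⟨hs.1.le, hs.2⟩
    set y := c + s * (x - c) with hy
    set y₀ := c + s * (x₀ - c) with hy₀
    have hyI : y ∈ Icc a b := umem hc hxI hs01
    have hy₀I : y₀ ∈ Icc a b := umem hc hx₀ hs01
    have hyy₀ : y - y₀ = s * (x - x₀) := by rw [hy, hy₀]; ring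
    have hsabs : |y - y₀| ≤ |x - x₀| := by
      rw [hyy₀, abs_mul, abs_of_nonneg hs.1.le]
      nlinarith [abs_nonneg (x - x₀), hs.2]
    have hest := hδ y₀ hy₀I y hyI (lt_of_le_of_lt hsabs hxd)
    have heq : s ^ j * φ y - s ^ j * φ y₀ - (x - x₀) * (s ^ (j + 1) * D y₀)
        = s ^ j * (φ y - φ y₀ - (y - y₀) * D y₀) := by
      rw [hyy₀]; ring
    rw [Real.norm_eq_abs, heq, abs_mul]
    have hsj : |s ^ j| ≤ 1 := by
      rw [abs_of_nonneg (pow_nonneg hs.1.le j)]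
      exact pow_le_one₀ hs.1.le hs.2
    calc |s ^ j| * |φ y - φ y₀ - (y - y₀) * D y₀|
        ≤ 1 * (ε * |y - y₀|) :=
          mul_le_mul hsj hest (abs_nonneg _) zero_le_one
      _ = ε * |y - y₀| := one_mul _
      _ ≤ ε * |x - x₀| := by nlinarith [hε.le]
  calc ‖∫ s in (0:ℝ)..1, (s ^ j * φ (c + s * (x - c)) - s ^ j * φ (c + s * (x₀ - c))
          - (x - x₀) * (s ^ (j + 1) * D (c + s * (x₀ - c))))‖
      ≤ ε * |x - x₀| * |1 - 0| := intervalIntegral.norm_integral_le_of_norm_le_const hbnd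
    _ = ε * ‖x - x₀‖ := by rw [Real.norm_eq_abs]; norm_num

lemma smI_contDiffOn {a b c : ℝ} (hab : a < b) (hc : c ∈ Icc a b) (k : ℕ) :
    ∀ (j : ℕ) (φ : ℝ → ℝ), ContDiffOn ℝ k φ (Icc a b) →
      ContDiffOn ℝ k (smI c j φ) (Icc a b) := by
  induction k with
  | zero =>
    intro j φ hφ
    simp only [Nat.cast_zero, contDiffOn_zero] at hφ ⊢
    intro x₀ hx₀
    rw [Metric.continuousWithinAt_iff]
    intro ε hε
    obtain ⟨δ, hδpos, H⟩ :=
      (Metric.uniformContinuousOn_iff.1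
        (isCompact_Icc.uniformContinuousOn_of_continuous hφ)) (ε / 2) (by linarith)
    refine ⟨δ, hδpos, fun {x} hx hxd => ?_⟩
    have hxd' : |x - x₀| < δ := by rwa [Real.dist_eq] at hxd
    have comb : smI c j φ x - smI c j φ x₀
        = ∫ s in (0:ℝ)..1, (s ^ j * φ (c + s * (x - c)) - s ^ j * φ (c + s * (x₀ - c))) := by
      simp only [smI]
      rw [← intervalIntegral.integral_sub (integrand_intble j hφ hc hx)
        (integrand_intble j hφ hc hx₀)]
    have hbnd : ∀ s ∈ Set.uIoc (0:ℝ) 1,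
        ‖s ^ j * φ (c + s * (x - c)) - s ^ j * φ (c + s * (x₀ - c))‖ ≤ ε / 2 := by
      intro s hs
      rw [uIoc_of_le zero_le_one] at hs
      have hs01 : s ∈ Icc (0:ℝ) 1 := ⟨hs.1.le, hs.2⟩
      have hyI : c + s * (x - c) ∈ Icc a b := umem hc hx hs01
      have hy₀I : c + s * (x₀ - c) ∈ Icc a b := umem hc hx₀ hs01
      have hdd : dist (c + s * (x - c)) (c + s * (x₀ - c)) < δ := by
        rw [Real.dist_eq]
        have : c + s * (x - c) - (c + s * (x₀ - c)) = s * (x - x₀) := by ring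
        rw [this, abs_mul, abs_of_nonneg hs.1.le]
        calc s * |x - x₀| ≤ 1 * |x - x₀| := by
              nlinarith [abs_nonneg (x - x₀), hs.2]
          _ < δ := by rwa [one_mul]
      have hφd : dist (φ (c + s * (x - c))) (φ (c + s * (x₀ - c))) < ε / 2 :=
        H _ hyI _ hy₀I hdd
      have : s ^ j * φ (c + s * (x - c)) - s ^ j * φ (c + s * (x₀ - c))
          = s ^ j * (φ (c + s * (x - c)) - φ (c + s * (x₀ - c))) := by ring
      rw [Real.norm_eq_abs, this, abs_mul]
      have hsj : |s ^ j| ≤ 1 := by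
        rw [abs_of_nonneg (pow_nonneg hs.1.le j)]
        exact pow_le_one₀ hs.1.le hs.2
      have h2 : |φ (c + s * (x - c)) - φ (c + s * (x₀ - c))| ≤ ε / 2 := by
        rw [← Real.dist_eq]; exact hφd.le
      nlinarith [abs_nonneg (φ (c + s * (x - c)) - φ (c + s * (x₀ - c)))]
    calc dist (smI c j φ x) (smI c j φ x₀) = ‖smI c j φ x - smI c j φ x₀‖ := by
          rw [Real.dist_eq, Real.norm_eq_abs]
      _ = ‖∫ s in (0:ℝ)..1, (s ^ j * φ (c + s * (x - c)) - s ^ j * φ (c + s * (x₀ - c)))‖ := by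
          rw [comb]
      _ ≤ ε / 2 * |1 - 0| := intervalIntegral.norm_integral_le_of_norm_le_const hbnd
      _ < ε := by rw [show |(1:ℝ) - 0| = 1 by norm_num]; linarith
  | succ k ih =>
    intro j φ hφ
    have h1 : ContDiffOn ℝ 1 φ (Icc a b) := hφ.of_le (by exact_mod_cast Nat.one_le_iff_ne_zero.2 (Nat.succ_ne_zero k))
    have hd : ∀ x ∈ Icc a b, HasDerivWithinAt (smI c j φ)
        (smI c (j + 1) (derivWithin φ (Icc a b)) x) (Icc a b) x :=
      fun x hx => smI_hasDerivWithinAt hab hc j h1 hx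
    have hdiff : DifferentiableOn ℝ (smI c j φ) (Icc a b) :=
      fun x hx => (hd x hx).differentiableWithinAt
    have hder : ∀ x ∈ Icc a b, derivWithin (smI c j φ) (Icc a b) x
        = smI c (j + 1) (derivWithin φ (Icc a b)) x :=
      fun x hx => (hd x hx).derivWithin (uniqueDiffOn_Icc hab x hx)
    have hφ' : ContDiffOn ℝ k (derivWithin φ (Icc a b)) (Icc a b) :=
      hφ.derivWithin (uniqueDiffOn_Icc hab) (by exact_mod_cast le_rfl)
    have hcd : ContDiffOn ℝ k (derivWithin (smI c j φ) (Icc a b)) (Icc a b) :=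
      (ih (j + 1) _ hφ').congr hder
    have : ContDiffOn ℝ ((k : WithTop ℕ∞) + 1) (smI c j φ) (Icc a b) := by
      rw [contDiffOn_succ_iff_derivWithin (uniqueDiffOn_Icc hab)]
      exact ⟨hdiff, by simp, hcd⟩
    exact_mod_cast this

lemma key_factor {a b c : ℝ} (hab : a < b) (hc : c ∈ Icc a b) (k : ℕ) {f : ℝ → ℝ}
    (hf : ContDiffOn ℝ (k + 1 : ℕ) f (Icc a b)) (hfc : f c = 0) :
    ∃ g : ℝ → ℝ, ContDiffOn ℝ k g (Icc a b) ∧ ∀ x ∈ Icc a b, f x = (x - c) * g x := by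
  set φ := derivWithin f (Icc a b) with hφdef
  have hφ : ContDiffOn ℝ k φ (Icc a b) :=
    hf.derivWithin (uniqueDiffOn_Icc hab) (by exact_mod_cast le_rfl)
  have h1 : ContDiffOn ℝ 1 f (Icc a b) := hf.of_le (by exact_mod_cast Nat.one_le_iff_ne_zero.2 (Nat.succ_ne_zero k))
  have hφc : ContinuousOn φ (Icc a b) :=
    h1.continuousOn_derivWithin (uniqueDiffOn_Icc hab) le_rfl
  refine ⟨smI c 0 φ, smI_contDiffOn hab hc k 0 φ hφ, fun x hx => ?_⟩
  rcases eq_or_ne x c with rfl | hxc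
  · simp [hfc]
  · have hftc : ∫ s in (0:ℝ)..1, (x - c) * φ (c + s * (x - c))
        = f (c + 1 * (x - c)) - f (c + 0 * (x - c)) := by
      refine intervalIntegral.integral_eq_sub_of_hasDeriv_right_of_le
        (f := fun s => f (c + s * (x - c)))
        (f' := fun s => (x - c) * φ (c + s * (x - c))) zero_le_one ?_ ?_ ?_
      · exact h1.continuousOn.comp (by fun_prop) (fun s hs => umem hc hx hs)
      · intro s hs
        have hyoo : c + s * (x - c) ∈ Ioo a b := by
          obtain ⟨hc1, hc2⟩ := hc; obtain ⟨hx1, hx2⟩ := hx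
          rcases hxc.lt_or_gt with h | h <;> constructor <;> nlinarith [hs.1, hs.2]
        have hyI : c + s * (x - c) ∈ Icc a b := ⟨hyoo.1.le, hyoo.2.le⟩
        have hfd : HasDerivAt f (φ (c + s * (x - c))) (c + s * (x - c)) :=
          ((h1.differentiableOn one_ne_zero _ hyI).hasDerivWithinAt).hasDerivAt
            (Icc_mem_nhds hyoo.1 hyoo.2)
        have hin : HasDerivAt (fun s : ℝ => c + s * (x - c)) (x - c) s := by
          simpa using ((hasDerivAt_id s).mul_const (x - c)).const_add c
        have := (hfd.comp s hin).hasDerivWithinAt (s := Ioi s)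
        convert this using 1
        · rfl
        ring
      · apply ContinuousOn.intervalIntegrable
        rw [uIcc_of_le zero_le_one]
        refine ContinuousOn.mul (by fun_prop) (hφc.comp (by fun_prop) ?_)
        intro s hs; exact umem hc hx hs
    have hsm : smI c 0 φ x = ∫ s in (0:ℝ)..1, φ (c + s * (x - c)) := by
      simp only [smI, pow_zero, one_mul]
    rw [hsm, ← intervalIntegral.integral_const_mul] at *
    rw [show f x = f (c + 1 * (x - c)) - f (c + 0 * (x - c)) by
      rw [show c + 1 * (x - c) = x by ring, show c + 0 * (x - c) = c by ring, hfc, sub_zero]]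
    exact hftc.symm

theorem stmt_1 (n m : ℕ) (a b : ℝ) (hab : a ≤ b) (f : ℝ → ℝ)
    (hf : ContDiffOn ℝ (m + n) f (Set.Icc a b))
    (t : Fin n → ℝ) (ht : Function.Injective t)
    (htmem : ∀ i, t i ∈ Set.Icc a b)
    (hzero : ∀ i, f (t i) = 0) :
    ∃ g : ℝ → ℝ, ContDiffOn ℝ m g (Set.Icc a b) ∧
      ∀ x ∈ Set.Icc a b, f x = g x * ∏ i, (x - t i) := by
  rcases eq_or_lt_of_le hab with rfl | hab'
  · rcases Nat.eq_zero_or_pos n with rfl | hn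
    · exact ⟨f, by simpa using hf, by simp⟩
    · refine ⟨0, contDiffOn_const, fun x hx => ?_⟩
      have hx' : x = a := le_antisymm hx.2 hx.1
      have hi : (⟨0, hn⟩ : Fin n) = ⟨0, hn⟩ := rfl
      have hta : t ⟨0, hn⟩ = a := le_antisymm (htmem ⟨0, hn⟩).2 (htmem ⟨0, hn⟩).1
      subst hx'
      rw [← hta, hzero ⟨0, hn⟩]
      simp
  · clear hab
    induction n generalizing f with
    | zero => exact ⟨f, by simpa using hf, by simp⟩
    | succ n ih =>
      have hf' : ContDiffOn ℝ ((m + n) + 1 : ℕ) f (Set.Icc a b) := hf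
      obtain ⟨g₁, hg₁, hg₁f⟩ := key_factor hab' (htmem 0) (m + n) hf' (hzero 0)
      have hg₁zero : ∀ i : Fin n, g₁ (t i.succ) = 0 := by
        intro i
        have h0 := hg₁f (t i.succ) (htmem i.succ)
        rw [hzero i.succ] at h0
        have hne : t i.succ - t 0 ≠ 0 := by
          rw [sub_ne_zero]
          exact fun h => (Fin.succ_ne_zero i) (ht h)
        rcases mul_eq_zero.1 h0.symm with h | h
        · exact absurd h hne
        · exact h
      obtain ⟨g, hg, hgf⟩ := ih g₁ hg₁ (fun i => t i.succ)
        (fun i j hij => Fin.succ_injective n (ht hij))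
        (fun i => htmem i.succ) hg₁zero
      refine ⟨g, hg, fun x hx => ?_⟩
      rw [hg₁f x hx, hgf x hx, Fin.prod_univ_succ]
      ring
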